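/- arXiv:1908.04514 — 2 statements merged into one kernel-verified Lean document; each statement's English description precedes it below -/
import Mathlib

section
/- The map r(γ,t,z) = (−t, γ, γ(t)·z) is a group homomorphism from the central extension Γ̂ × Γ ×_σ 𝕋 to the central extension Γ × Γ̂ ×_{σ'} 𝕋: for all (γ₁,t₁,z₁), (γ₂,t₂,z₂), r((γ₁,t₁,z₁)·(γ₂,t₂,z₂)) = r(γ₁,t₁,z₁)·r(γ₂,t₂,z₂). -/
open MeasureTheory Complex ComplexConjugate

noncomputable section

/-- A model of the Pontryagin duality pairing between `Δ = Γ̂` and `Γ`: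
elements of `Δ` act as continuous unitary characters of `Γ`, and the pairing is
additive-to-multiplicative in both variables. -/
structure DualPairing (Δ Γ : Type*) [AddCommGroup Δ] [AddCommGroup Γ]
    [TopologicalSpace Δ] [TopologicalSpace Γ] where
  pair : Δ → Γ → ℂ
  norm_one : ∀ δ t, ‖pair δ t‖ = 1
  add_left : ∀ δ₁ δ₂ t, pair (δ₁ + δ₂) t = pair δ₁ t * pair δ₂ t
  add_right : ∀ δ t₁ t₂, pair δ (t₁ + t₂) = pair δ t₁ * pair δ t₂
  continuous_pair : Continuous fun q : Δ × Γ => pair q.1 q.2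

variable {Δ Γ : Type*} [AddCommGroup Δ] [AddCommGroup Γ]
  [TopologicalSpace Δ] [TopologicalSpace Γ]

/-- The 2-cocycle `σ((γ₁,t₁),(γ₂,t₂)) = conj (γ₂ t₁)` on `G = Γ̂ × Γ`. -/
def sigmaCocycle (P : DualPairing Δ Γ) (g₁ g₂ : Δ × Γ) : ℂ :=
  conj (P.pair g₂.1 g₁.2)

/-- The Schrödinger representation `(π(γ,t)ξ)(s) = γ(s) · ξ(s − t)`. -/
def schrodinger (P : DualPairing Δ Γ) (g : Δ × Γ) (ξ : Γ → ℂ) : Γ → ℂ :=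
  fun s => P.pair g.1 s * ξ (s - g.2)

/-- The 2-cocycle `σ'((t₁,γ₁),(t₂,γ₂)) = conj (γ₁ t₂)` on `Ĝ = Γ × Γ̂`. -/
def sigmaCocycle' (P : DualPairing Δ Γ) (h₁ h₂ : Γ × Δ) : ℂ :=
  conj (P.pair h₁.2 h₂.1)

/-- Multiplication of the central extension `G ×_σ 𝕋`, `G = Γ̂ × Γ`:
`(g₁,z₁)·(g₂,z₂) = (g₁+g₂, σ(g₁,g₂)z₁z₂)`. -/
def extMul (P : DualPairing Δ Γ) (a b : Δ × Γ × ℂ) : Δ × Γ × ℂ :=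
  (a.1 + b.1, a.2.1 + b.2.1,
    sigmaCocycle P (a.1, a.2.1) (b.1, b.2.1) * (a.2.2 * b.2.2))

/-- Multiplication of the central extension `Ĝ ×_{σ'} 𝕋`, `Ĝ = Γ × Γ̂`:
`(h₁,w₁)·(h₂,w₂) = (h₁+h₂, σ'(h₁,h₂)w₁w₂)`. -/
def extMulHat (P : DualPairing Δ Γ) (a b : Γ × Δ × ℂ) : Γ × Δ × ℂ :=
  (a.1 + b.1, a.2.1 + b.2.1,
    sigmaCocycle' P (a.1, a.2.1) (b.1, b.2.1) * (a.2.2 * b.2.2))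

/-- The map `r(γ,t,z) = (−t, γ, γ(t)·z)`. -/
def rMap (P : DualPairing Δ Γ) (a : Δ × Γ × ℂ) : Γ × Δ × ℂ :=
  (-a.2.1, a.1, P.pair a.1 a.2.1 * a.2.2)

lemma pair_ne_zero (P : DualPairing Δ Γ) (δ : Δ) (t : Γ) : P.pair δ t ≠ 0 := by
  intro h
  have := P.norm_one δ t
  rw [h] at this; simp at this

lemma conj_pair_mul (P : DualPairing Δ Γ) (δ : Δ) (t : Γ) :
    conj (P.pair δ t) * P.pair δ t = 1 := by
  rw [Complex.conj_mul']
  rw [P.norm_one]; norm_num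

lemma pair_zero_right (P : DualPairing Δ Γ) (δ : Δ) : P.pair δ 0 = 1 := by
  have h := P.add_right δ 0 0
  simp at h
  have := pair_ne_zero P δ 0
  field_simp at h
  tauto

lemma pair_neg_right (P : DualPairing Δ Γ) (δ : Δ) (t : Γ) :
    P.pair δ t * P.pair δ (-t) = 1 := by
  rw [← P.add_right, add_neg_cancel, pair_zero_right]

lemma conj_pair_neg (P : DualPairing Δ Γ) (δ : Δ) (t : Γ) :
    conj (P.pair δ (-t)) = P.pair δ t := by
  have h1 := conj_pair_mul P δ (-t)
  have h2 := pair_neg_right P δ t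
  calc conj (P.pair δ (-t)) = conj (P.pair δ (-t)) * (P.pair δ t * P.pair δ (-t)) := by
        rw [h2]; ring
    _ = P.pair δ t * (conj (P.pair δ (-t)) * P.pair δ (-t)) := by ring
    _ = P.pair δ t := by rw [h1]; ring

/-- `r(γ,t,z) = (−t, γ, γ(t)z)` is a group homomorphism from `Γ̂ × Γ ×_σ 𝕋`
to `Γ × Γ̂ ×_{σ'} 𝕋`. -/
theorem rMap_is_hom (P : DualPairing Δ Γ) (a b : Δ × Γ × ℂ)
    (ha : ‖a.2.2‖ = 1) (hb : ‖b.2.2‖ = 1) :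
    rMap P (extMul P a b) = extMulHat P (rMap P a) (rMap P b) := by
  obtain ⟨γ₁, t₁, z₁⟩ := a
  obtain ⟨γ₂, t₂, z₂⟩ := b
  simp only [rMap, extMul, extMulHat, sigmaCocycle, sigmaCocycle', Prod.mk.injEq]
  refine ⟨by abel, trivial, ?_⟩
  rw [P.add_left, P.add_right, P.add_right, conj_pair_neg]
  have hp := pair_ne_zero P γ₂ t₁
  have h : (starRingEnd ℂ) (P.pair γ₂ t₁) = (P.pair γ₂ t₁)⁻¹ := by
    have := conj_pair_mul P γ₂ t₁
    field_simp
    linear_combination this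
  rw [h]
  field_simp
end
end

section
/- Twisted convolution of dual short-time Fourier transforms: let ξ₁, ξ₂, η₁, η₂ be Schwartz functions on ℝⁿ. Then for every g ∈ ℝⁿ×ℝⁿ, (V°_{η₂}ξ₂ ♮ V°_{η₁}ξ₁)(g) = ⟨ξ₁, η₂⟩ · V°_{η₁}ξ₂(g), where ⟨ξ₁, η₂⟩ is the L²(ℝⁿ) inner product. -/
open MeasureTheory Complex ComplexConjugate

noncomputable section

variable {n : ℕ}

/-- The Euclidean inner product on `ℝⁿ`. -/
def dot {n : ℕ} (y s : Fin n → ℝ) : ℝ := ∑ i, y i * s i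

/-- `e2pi r = e^{2πir}`. -/
def e2pi (r : ℝ) : ℂ := Complex.exp (2 * Real.pi * Complex.I * r)

/-- The Schrödinger representation `π(y,x)ξ(s) = e^{2πi⟨y,s⟩} ξ(s−x)`. -/
def schrod {n : ℕ} (y x : Fin n → ℝ) (ξ : (Fin n → ℝ) → ℂ) : (Fin n → ℝ) → ℂ :=
  fun s => e2pi (dot y s) * ξ (s - x)

/-- The dual Schrödinger representation `π°ι(y,x)ξ(s) = e^{−2πi⟨x,s−y⟩} ξ(s−y)`. -/
def schrodDual {n : ℕ} (y x : Fin n → ℝ) (ξ : (Fin n → ℝ) → ℂ) : (Fin n → ℝ) → ℂ :=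
  fun s => e2pi (-(dot x (s - y))) * ξ (s - y)

/-- The Fourier transform `𝓕f(y) = ∫ f(s) e^{−2πi⟨y,s⟩} ds`. -/
def fourierT {n : ℕ} (f : (Fin n → ℝ) → ℂ) : (Fin n → ℝ) → ℂ :=
  fun y => ∫ s, f s * e2pi (-(dot y s))

/-- The `L²` inner product `⟨f,g⟩ = ∫ f · conj g`, linear in the first argument. -/
def ip {n : ℕ} (f g : (Fin n → ℝ) → ℂ) : ℂ := ∫ s, f s * conj (g s)

/-- The short-time Fourier transform `V_ηξ(y,x) = ⟨ξ, π(y,x)η⟩`. -/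
def stft {n : ℕ} (η ξ : (Fin n → ℝ) → ℂ) (g : (Fin n → ℝ) × (Fin n → ℝ)) : ℂ :=
  ip ξ (schrod g.1 g.2 η)

/-- The dual short-time Fourier transform `V°_ηξ(y,x) = ⟨ξ, π°ι(y,x)η⟩`. -/
def stftDual {n : ℕ} (η ξ : (Fin n → ℝ) → ℂ) (g : (Fin n → ℝ) × (Fin n → ℝ)) : ℂ :=
  ip ξ (schrodDual g.1 g.2 η)

/-- The 2-cocycle `σ((y₁,x₁),(y₂,x₂)) = e^{−2πi⟨x₁,y₂⟩}` on `G = ℝⁿ × ℝⁿ`. -/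
def sigmaG {n : ℕ} (g₁ g₂ : (Fin n → ℝ) × (Fin n → ℝ)) : ℂ :=
  e2pi (-(dot g₁.2 g₂.1))

/-- The twisted convolution `(a ♮ b)(g) = ∫ a(g') b(g−g') σ(g', g−g') dg'`. -/
def twConv {n : ℕ} (a b : ((Fin n → ℝ) × (Fin n → ℝ)) → ℂ) :
    ((Fin n → ℝ) × (Fin n → ℝ)) → ℂ :=
  fun g => ∫ g', a g' * b (g - g') * sigmaG g' (g - g')

/-! ### Auxiliary material for the proof -/

namespace TwistedAux

open SchwartzMap FourierTransform
open scoped RealInnerProductSpace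

set_option linter.unusedSectionVars false

/-! #### Basic facts about `e2pi` -/

lemma fourierChar_eq_e2pi (r : ℝ) : ((Real.fourierChar r : Circle) : ℂ) = e2pi r := by
  rw [Real.fourierChar_apply, e2pi]; push_cast; ring_nf

lemma e2pi_add (a b : ℝ) : e2pi (a + b) = e2pi a * e2pi b := by
  rw [e2pi, e2pi, e2pi, ← Complex.exp_add]; push_cast; ring_nf

lemma norm_e2pi (r : ℝ) : ‖e2pi r‖ = 1 := by
  rw [e2pi, Complex.norm_exp]
  have : (2 * Real.pi * Complex.I * r).re = 0 := by simp [Complex.mul_re]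
  simp [this]

lemma conj_e2pi (r : ℝ) : (starRingEnd ℂ) (e2pi r) = e2pi (-r) := by
  rw [e2pi, e2pi, ← Complex.exp_conj]
  congr 1
  simp only [map_mul, Complex.conj_I, Complex.conj_ofReal, map_ofNat]
  push_cast
  ring

lemma continuous_e2pi : Continuous e2pi := by
  unfold e2pi; fun_prop

/-! #### Generic Schwartz space helpers -/

section SchwartzHelpers

variable {D : Type*} [NormedAddCommGroup D] [NormedSpace ℝ D]

lemma schwartz_hasTemperateGrowth (f : 𝓢(D, ℂ)) : Function.HasTemperateGrowth ⇑f := by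
  refine ⟨f.smooth', fun N => ⟨0, SchwartzMap.seminorm ℝ 0 N f, fun x => ?_⟩⟩
  have h := f.le_seminorm ℝ 0 N x
  simpa using h

/-- conjugation of a Schwartz map -/
def conjS (f : 𝓢(D, ℂ)) : 𝓢(D, ℂ) where
  toFun := fun x => (starRingEnd ℂ) (f x)
  smooth' := by
    have : (fun x => (starRingEnd ℂ) (f x)) = ⇑Complex.conjLIE ∘ ⇑f := rfl
    rw [this]
    exact (Complex.conjLIE.toLinearIsometry.contDiff (𝕜 := ℝ)).comp f.smooth'
  decay' := by
    intro k m
    obtain ⟨C, hC⟩ := f.decay' k m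
    refine ⟨C, fun x => ?_⟩
    have : (fun x => (starRingEnd ℂ) (f x)) = ⇑Complex.conjLIE ∘ ⇑f := rfl
    rw [this, Complex.conjLIE.norm_iteratedFDeriv_comp_left (𝕜 := ℝ) ⇑f x m]
    exact hC x

@[simp] lemma conjS_apply (f : 𝓢(D, ℂ)) (x : D) : conjS f x = (starRingEnd ℂ) (f x) := rfl

lemma hasTemperateGrowth_add_const (c : D) :
    Function.HasTemperateGrowth (fun x : D => x + c) := by
  apply Function.HasTemperateGrowth.of_fderiv (k := 1) (C := 1 + ‖c‖)
  · have : (fderiv ℝ (fun x : D => x + c)) = fun _ => ContinuousLinearMap.id ℝ D := by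
      ext1 x
      rw [fderiv_add_const]
      exact fderiv_id'
    rw [this]
    exact Function.HasTemperateGrowth.const _
  · exact differentiable_id.add_const c
  · intro x
    have h : ‖x + c‖ ≤ ‖x‖ + ‖c‖ := norm_add_le x c
    have h2 : (0:ℝ) ≤ ‖x‖ := norm_nonneg _
    have h3 : (0:ℝ) ≤ ‖c‖ := norm_nonneg _
    nlinarith

/-- translation of a Schwartz map: `(trS c f) x = f (x + c)` -/
def trS (c : D) : 𝓢(D, ℂ) →L[ℝ] 𝓢(D, ℂ) :=
  SchwartzMap.compCLM ℝ (hasTemperateGrowth_add_const c)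
    ⟨1, 1 + ‖c‖, fun x => by
      have h : ‖x‖ ≤ ‖x + c‖ + ‖c‖ := by
        calc ‖x‖ = ‖x + c - c‖ := by rw [add_sub_cancel_right]
        _ ≤ ‖x + c‖ + ‖c‖ := norm_sub_le _ _
      have h2 : (0:ℝ) ≤ ‖x + c‖ := norm_nonneg _
      have h3 : (0:ℝ) ≤ ‖c‖ := norm_nonneg _
      nlinarith⟩

@[simp] lemma trS_apply (c : D) (f : 𝓢(D, ℂ)) (x : D) : trS c f x = f (x + c) := rfl

/-- product of two Schwartz maps -/
def mulS (f g : 𝓢(D, ℂ)) : 𝓢(D, ℂ) :=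
  SchwartzMap.bilinLeftCLM (ContinuousLinearMap.mul ℝ ℂ) (schwartz_hasTemperateGrowth g) f

@[simp] lemma mulS_apply (f g : 𝓢(D, ℂ)) (x : D) : mulS f g x = f x * g x := rfl

lemma schwartz_decay (f : 𝓢(D, ℂ)) (k : ℕ) :
    ∃ C : ℝ, 0 ≤ C ∧ ∀ t, ‖f t‖ ≤ C * ((1 + ‖t‖) ^ k)⁻¹ := by
  set C := 2 ^ k * ((Finset.Iic (k, 0)).sup fun m => SchwartzMap.seminorm ℝ m.1 m.2) f with hCdef
  refine ⟨C, ?_, fun t => ?_⟩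
  · positivity
  · have h := SchwartzMap.one_add_le_sup_seminorm_apply (𝕜 := ℝ) (m := (k, 0)) le_rfl le_rfl f t
    rw [norm_iteratedFDeriv_zero] at h
    have hpos : (0:ℝ) < (1 + ‖t‖) ^ k := by positivity
    rw [← div_eq_mul_inv, le_div_iff₀' hpos]
    exact h

lemma schwartz_bounded (f : 𝓢(D, ℂ)) : ∃ C : ℝ, 0 ≤ C ∧ ∀ t, ‖f t‖ ≤ C := by
  obtain ⟨C, hC0, hC⟩ := schwartz_decay f 0
  exact ⟨C, hC0, fun t => by simpa using hC t⟩

end SchwartzHelpers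

/-! #### Fourier analysis on a finite-dimensional inner product space -/

section InnerSpace

variable {V : Type*} [NormedAddCommGroup V] [InnerProductSpace ℝ V] [MeasurableSpace V]
  [BorelSpace V] [FiniteDimensional ℝ V]

lemma fourier_as_e2pi (f : V → ℂ) (w : V) :
    𝓕 f w = ∫ v, f v * e2pi (-⟪v, w⟫) := by
  rw [Real.fourier_eq]
  congr 1
  ext v
  rw [Circle.smul_def, fourierChar_eq_e2pi, smul_eq_mul, mul_comm]

lemma fourierInv_as_e2pi (f : V → ℂ) (w : V) :
    𝓕⁻ f w = ∫ v, f v * e2pi ⟪v, w⟫ := by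
  rw [Real.fourierInv_eq]
  congr 1
  ext v
  rw [Circle.smul_def, fourierChar_eq_e2pi, smul_eq_mul, mul_comm]

/-- inverse Fourier transform of a Schwartz map, as a Schwartz map -/
def invFS (f : 𝓢(V, ℂ)) : 𝓢(V, ℂ) :=
  (compCLMOfContinuousLinearEquiv ℝ (LinearIsometryEquiv.neg ℝ (E := V)))
    (fourierTransformCLM ℝ f)

lemma invFS_apply (f : 𝓢(V, ℂ)) : ⇑(invFS f) = 𝓕⁻ ⇑f := by
  funext w
  have : invFS f w = (𝓕 ⇑f) (-w) := rfl
  rw [this, ← Real.fourierInv_eq_fourier_neg]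

lemma integrable_fourierInv (f : 𝓢(V, ℂ)) : Integrable (𝓕⁻ ⇑f) := by
  rw [← invFS_apply]; exact (invFS f).integrable

lemma continuous_fourierInv (f : 𝓢(V, ℂ)) : Continuous (𝓕⁻ ⇑f) := by
  rw [← invFS_apply]; exact (invFS f).continuous

lemma integrable_fourier (f : 𝓢(V, ℂ)) : Integrable (𝓕 ⇑f) := by
  rw [← fourier_coe f]; exact (𝓕 f).integrable

lemma continuous_fourier (f : 𝓢(V, ℂ)) : Continuous (𝓕 ⇑f) := by
  rw [← fourier_coe f]; exact (𝓕 f).continuous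

lemma one_add_norm_mul (t a : V) : (1 + ‖a‖) ≤ (1 + ‖t‖) * (1 + ‖t + a‖) := by
  have h : ‖a‖ ≤ ‖t‖ + ‖t + a‖ := by
    calc ‖a‖ = ‖t + a - t‖ := by rw [add_sub_cancel_left]
    _ ≤ ‖t + a‖ + ‖t‖ := norm_sub_le _ _
    _ = ‖t‖ + ‖t + a‖ := by ring
  nlinarith [norm_nonneg t, norm_nonneg (t + a), norm_nonneg a]

lemma integrable_inv_pow :
    Integrable (fun t : V => ((1 + ‖t‖) ^ (Module.finrank ℝ V + 1))⁻¹) := by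
  have h := integrable_one_add_norm (E := V) (μ := volume)
    (r := (Module.finrank ℝ V : ℝ) + 1) (by norm_num)
  refine h.congr (ae_of_all _ fun t => ?_)
  show (1 + ‖t‖) ^ (-((Module.finrank ℝ V : ℝ) + 1)) = ((1 + ‖t‖) ^ (Module.finrank ℝ V + 1))⁻¹
  rw [Real.rpow_neg (by positivity)]
  congr 1
  rw [← Real.rpow_natCast (1 + ‖t‖) (Module.finrank ℝ V + 1)]
  norm_num

lemma key_ptwise (k : ℕ) (t a : V) :
    ((1 + ‖t‖) ^ (k + (Module.finrank ℝ V + 1)))⁻¹ *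
      ((1 + ‖t + a‖) ^ (k + (Module.finrank ℝ V + 1)))⁻¹
      ≤ ((1 + ‖a‖) ^ k)⁻¹ * ((1 + ‖t‖) ^ (Module.finrank ℝ V + 1))⁻¹ := by
  set m := Module.finrank ℝ V + 1
  have h1 : (0:ℝ) < 1 + ‖t‖ := by positivity
  have h2 : (0:ℝ) < 1 + ‖t + a‖ := by positivity
  have h3 : (0:ℝ) < 1 + ‖a‖ := by positivity
  rw [← mul_inv, ← mul_inv]
  apply inv_anti₀ (by positivity)
  calc (1 + ‖a‖) ^ k * (1 + ‖t‖) ^ m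
      ≤ ((1 + ‖t‖) * (1 + ‖t + a‖)) ^ k * ((1 + ‖t‖) * (1 + ‖t + a‖)) ^ m := by
        apply mul_le_mul
        · exact pow_le_pow_left₀ (le_of_lt h3) (one_add_norm_mul t a) k
        · apply pow_le_pow_left₀ (le_of_lt h1)
          nlinarith [norm_nonneg t, norm_nonneg (t + a)]
        · positivity
        · positivity
    _ = (1 + ‖t‖) ^ (k + m) * (1 + ‖t + a‖) ^ (k + m) := by
        rw [mul_pow, mul_pow, pow_add, pow_add]; ring

lemma integrable_norm_mul_shift (f h : 𝓢(V, ℂ)) (a : V) :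
    Integrable (fun t : V => ‖f t‖ * ‖h (t + a)‖) := by
  obtain ⟨C, _, hC⟩ := schwartz_bounded h
  have h1 : Integrable (fun t : V => ‖h (t + a)‖ * ‖f t‖) :=
    Integrable.bdd_mul f.integrable.norm
      ((h.continuous.comp (continuous_id.add continuous_const)).norm.aestronglyMeasurable)
      (c := C) (ae_of_all _ fun t => by simpa using hC (t + a))
  exact h1.congr (ae_of_all _ fun t => mul_comm _ _)

lemma conv_decay (f h : 𝓢(V, ℂ)) (k : ℕ) :
    ∃ C : ℝ, 0 ≤ C ∧ ∀ a : V, (∫ t, ‖f t‖ * ‖h (t + a)‖) ≤ C * ((1 + ‖a‖) ^ k)⁻¹ := by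
  obtain ⟨Cf, hCf0, hCf⟩ := schwartz_decay f (k + (Module.finrank ℝ V + 1))
  obtain ⟨Ch, hCh0, hCh⟩ := schwartz_decay h (k + (Module.finrank ℝ V + 1))
  set In := ∫ t : V, ((1 + ‖t‖) ^ (Module.finrank ℝ V + 1))⁻¹ with hIn
  have hIn0 : 0 ≤ In := integral_nonneg fun t => by positivity
  refine ⟨Cf * Ch * In, by positivity, fun a => ?_⟩
  have hint : Integrable (fun t : V => ‖f t‖ * ‖h (t + a)‖) := integrable_norm_mul_shift f h a
  have hint2 : Integrable (fun t : V =>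
      Cf * Ch * (((1 + ‖a‖) ^ k)⁻¹ * ((1 + ‖t‖) ^ (Module.finrank ℝ V + 1))⁻¹)) :=
    (integrable_inv_pow.const_mul _).const_mul _
  calc (∫ t, ‖f t‖ * ‖h (t + a)‖)
      ≤ ∫ t : V, Cf * Ch * (((1 + ‖a‖) ^ k)⁻¹ * ((1 + ‖t‖) ^ (Module.finrank ℝ V + 1))⁻¹) := by
        apply integral_mono hint hint2
        intro t
        calc ‖f t‖ * ‖h (t + a)‖
            ≤ (Cf * ((1 + ‖t‖) ^ (k + (Module.finrank ℝ V + 1)))⁻¹) *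
              (Ch * ((1 + ‖t + a‖) ^ (k + (Module.finrank ℝ V + 1)))⁻¹) :=
              mul_le_mul (hCf t) (hCh (t + a)) (norm_nonneg _) (by positivity)
          _ = Cf * Ch * (((1 + ‖t‖) ^ (k + (Module.finrank ℝ V + 1)))⁻¹ *
              ((1 + ‖t + a‖) ^ (k + (Module.finrank ℝ V + 1)))⁻¹) := by ring
          _ ≤ Cf * Ch * (((1 + ‖a‖) ^ k)⁻¹ * ((1 + ‖t‖) ^ (Module.finrank ℝ V + 1))⁻¹) := by
              apply mul_le_mul_of_nonneg_left (key_ptwise k t a) (by positivity)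
    _ = Cf * Ch * In * ((1 + ‖a‖) ^ k)⁻¹ := by
        have hrw : ∀ t : V, Cf * Ch * (((1 + ‖a‖) ^ k)⁻¹ * ((1 + ‖t‖) ^ (Module.finrank ℝ V + 1))⁻¹)
            = (Cf * Ch * ((1 + ‖a‖) ^ k)⁻¹) * ((1 + ‖t‖) ^ (Module.finrank ℝ V + 1))⁻¹ :=
          fun t => by ring
        simp only [hrw]
        rw [MeasureTheory.integral_const_mul]
        ring

/-! #### The dual STFT over an inner product space -/

/-- Euclidean-space version of the dual STFT (with the conjugation carried out). -/
def VD (η ξ : V → ℂ) (y x : V) : ℂ :=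
  ∫ s, ξ s * (starRingEnd ℂ) (η (s - y)) * e2pi ⟪x, s - y⟫

lemma VD_def (η ξ : V → ℂ) (y x : V) :
    VD η ξ y x = ∫ s, ξ s * (starRingEnd ℂ) (η (s - y)) * e2pi ⟪x, s - y⟫ := rfl

lemma VD_eq_fourierInv (η ξ : 𝓢(V, ℂ)) (y x : V) :
    VD ⇑η ⇑ξ y x = 𝓕⁻ ⇑(mulS (trS y ξ) (conjS η)) x := by
  rw [fourierInv_as_e2pi, VD_def,
    ← integral_add_right_eq_self (fun s => ξ s * (starRingEnd ℂ) (η (s - y)) * e2pi ⟪x, s - y⟫) y]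
  congr 1
  funext u
  simp only [mulS_apply, trS_apply, conjS_apply, add_sub_cancel_right]
  rw [real_inner_comm u x]

/-- Fubini helper: integrability of `F(a) * (G(b) * κ(a,b))` with unimodular `κ`. -/
lemma integrable_kernel {F G : V → ℂ} (hFi : Integrable F) (hGi : Integrable G)
    (hFc : Continuous F) (hGc : Continuous G)
    (κ : V → V → ℂ) (hκc : Continuous fun p : V × V => κ p.1 p.2)
    (hκ1 : ∀ a b, ‖κ a b‖ = 1) :
    Integrable (Function.uncurry fun a b => F a * (G b * κ a b)) (volume.prod volume) := by
  have hbound : Integrable (fun p : V × V => ‖F p.1‖ * ‖G p.2‖) (volume.prod volume) :=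
    hFi.norm.mul_prod hGi.norm
  refine hbound.mono' ?_ (ae_of_all _ fun p => ?_)
  · exact ((hFc.comp continuous_fst).mul ((hGc.comp continuous_snd).mul hκc)).aestronglyMeasurable
  · have : ‖Function.uncurry (fun a b => F a * (G b * κ a b)) p‖
        = ‖F p.1‖ * (‖G p.2‖ * ‖κ p.1 p.2‖) := by
      simp [Function.uncurry, norm_mul]
    rw [this, hκ1, mul_one]

lemma VD_plancherel (η ξ : 𝓢(V, ℂ)) (y x : V) :
    VD ⇑η ⇑ξ y x = ∫ w, 𝓕 ⇑ξ w * (e2pi ⟪w, y⟫ * (starRingEnd ℂ) (𝓕 ⇑η (w + x))) := by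
  have hηc : Continuous fun s : V => (starRingEnd ℂ) (η (s - y)) :=
    Complex.continuous_conj.comp (η.continuous.comp (continuous_id.sub continuous_const))
  have hηi : Integrable fun s : V => (starRingEnd ℂ) (η (s - y)) := by
    refine (conjS (trS (-y) η)).integrable.congr (ae_of_all _ fun s => ?_)
    simp [sub_eq_add_neg]
  have h1 : ∀ s : V, ξ s * (starRingEnd ℂ) (η (s - y)) * e2pi ⟪x, s - y⟫
      = ∫ w, (starRingEnd ℂ) (η (s - y)) * (𝓕 ⇑ξ w * e2pi (⟪w, s⟫ + ⟪x, s - y⟫)) := by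
    intro s
    have hinv : ξ s = ∫ w, 𝓕 ⇑ξ w * e2pi ⟪w, s⟫ := by
      conv_lhs => rw [← ξ.integrable.fourierInv_fourier_eq (integrable_fourier ξ)
        ξ.continuous.continuousAt (v := s)]
      rw [fourierInv_as_e2pi]
    rw [hinv, ← integral_mul_const, ← integral_mul_const]
    congr 1
    funext w
    rw [e2pi_add]
    ring
  rw [VD_def]
  have h2 : (fun s => ξ s * (starRingEnd ℂ) (η (s - y)) * e2pi ⟪x, s - y⟫)
      = fun s => ∫ w, (starRingEnd ℂ) (η (s - y)) * (𝓕 ⇑ξ w * e2pi (⟪w, s⟫ + ⟪x, s - y⟫)) :=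
    funext h1
  rw [h2]
  rw [integral_integral_swap (f := fun s w =>
      (starRingEnd ℂ) (η (s - y)) * (𝓕 ⇑ξ w * e2pi (⟪w, s⟫ + ⟪x, s - y⟫)))
    (integrable_kernel hηi (integrable_fourier ξ) hηc (continuous_fourier ξ)
      (fun s w => e2pi (⟪w, s⟫ + ⟪x, s - y⟫))
      (continuous_e2pi.comp (((continuous_snd.inner continuous_fst)).add
        (continuous_const.inner (continuous_fst.sub continuous_const))))
      (fun a b => norm_e2pi _))]
  congr 1
  funext w
  calc (∫ s, (starRingEnd ℂ) (η (s - y)) * (𝓕 ⇑ξ w * e2pi (⟪w, s⟫ + ⟪x, s - y⟫)))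
      = ∫ u, (starRingEnd ℂ) (η u) * (𝓕 ⇑ξ w * e2pi (⟪w, u + y⟫ + ⟪x, u⟫)) := by
        rw [← integral_add_right_eq_self (fun s =>
          (starRingEnd ℂ) (η (s - y)) * (𝓕 ⇑ξ w * e2pi (⟪w, s⟫ + ⟪x, s - y⟫))) y]
        congr 1
        funext u
        rw [add_sub_cancel_right]
    _ = 𝓕 ⇑ξ w * (e2pi ⟪w, y⟫ * ∫ u, (starRingEnd ℂ) (η u) * e2pi ⟪w + x, u⟫) := by
        rw [← integral_const_mul, ← integral_const_mul]
        congr 1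
        funext u
        have harg : ⟪w, u + y⟫ + ⟪x, u⟫ = ⟪w, y⟫ + ⟪w + x, u⟫ := by
          rw [inner_add_right, inner_add_left]
          ring
        rw [harg, e2pi_add]
        ring
    _ = 𝓕 ⇑ξ w * (e2pi ⟪w, y⟫ * (starRingEnd ℂ) (𝓕 ⇑η (w + x))) := by
        congr 2
        rw [fourier_as_e2pi, ← integral_conj]
        congr 1
        funext u
        rw [map_mul, conj_e2pi, neg_neg, real_inner_comm u (w + x)]

lemma norm_VD_le_conv_left (η ξ : 𝓢(V, ℂ)) (y x : V) :
    ‖VD ⇑η ⇑ξ y x‖ ≤ ∫ s, ‖ξ s‖ * ‖η (s + -y)‖ := by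
  rw [VD_def]
  refine norm_integral_le_of_norm_le (integrable_norm_mul_shift ξ η (-y))
    (ae_of_all _ fun s => ?_)
  rw [norm_mul, norm_mul, norm_e2pi, mul_one, RCLike.norm_conj, ← sub_eq_add_neg]

lemma norm_VD_le_conv_right (η ξ : 𝓢(V, ℂ)) (y x : V) :
    ‖VD ⇑η ⇑ξ y x‖ ≤ ∫ w, ‖fourierTransformCLM ℝ ξ w‖ * ‖fourierTransformCLM ℝ η (w + x)‖ := by
  rw [VD_plancherel]
  refine norm_integral_le_of_norm_le
    (integrable_norm_mul_shift (fourierTransformCLM ℝ ξ) (fourierTransformCLM ℝ η) x)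
    (ae_of_all _ fun w => ?_)
  rw [norm_mul, norm_mul, norm_e2pi, one_mul, RCLike.norm_conj]
  simp only [fourierTransformCLM_apply]
  exact le_refl _

lemma VD_decay (η ξ : 𝓢(V, ℂ)) :
    ∃ C : ℝ, 0 ≤ C ∧ ∀ y x : V, ‖VD ⇑η ⇑ξ y x‖ ≤
      C * ((1 + ‖y‖) ^ (Module.finrank ℝ V + 1))⁻¹ *
        ((1 + ‖x‖) ^ (Module.finrank ℝ V + 1))⁻¹ := by
  set d := Module.finrank ℝ V + 1 with hd
  obtain ⟨C₁, hC₁0, hC₁⟩ := conv_decay ξ η (d + d)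
  obtain ⟨C₂, hC₂0, hC₂⟩ :=
    conv_decay (fourierTransformCLM ℝ ξ) (fourierTransformCLM ℝ η) (d + d)
  refine ⟨Real.sqrt (C₁ * C₂), Real.sqrt_nonneg _, fun y x => ?_⟩
  set w1 := ((1 + ‖y‖) ^ d)⁻¹ with hw1
  set w2 := ((1 + ‖x‖) ^ d)⁻¹ with hw2
  have hw10 : 0 ≤ w1 := by positivity
  have hw20 : 0 ≤ w2 := by positivity
  have hsq1 : ((1 + ‖y‖) ^ (d + d))⁻¹ = w1 * w1 := by rw [hw1, pow_add, mul_inv]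
  have hsq2 : ((1 + ‖x‖) ^ (d + d))⁻¹ = w2 * w2 := by rw [hw2, pow_add, mul_inv]
  have ha : ‖VD ⇑η ⇑ξ y x‖ ≤ C₁ * (w1 * w1) := by
    rw [← hsq1]
    refine (norm_VD_le_conv_left η ξ y x).trans ?_
    have := hC₁ (-y)
    rwa [norm_neg] at this
  have hb : ‖VD ⇑η ⇑ξ y x‖ ≤ C₂ * (w2 * w2) := by
    rw [← hsq2]
    exact (norm_VD_le_conv_right η ξ y x).trans (hC₂ x)
  have hv0 : 0 ≤ ‖VD ⇑η ⇑ξ y x‖ := norm_nonneg _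
  set v := ‖VD ⇑η ⇑ξ y x‖
  have hM0 : 0 ≤ Real.sqrt (C₁ * C₂) * w1 * w2 := by positivity
  have hMsq : (Real.sqrt (C₁ * C₂) * w1 * w2) ^ 2 = (C₁ * (w1 * w1)) * (C₂ * (w2 * w2)) := by
    have h : Real.sqrt (C₁ * C₂) ^ 2 = C₁ * C₂ := Real.sq_sqrt (by positivity)
    rw [mul_pow, mul_pow, h]
    ring
  have hvsq : v ^ 2 ≤ (Real.sqrt (C₁ * C₂) * w1 * w2) ^ 2 := by
    rw [hMsq]
    calc v ^ 2 = v * v := sq v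
    _ ≤ (C₁ * (w1 * w1)) * (C₂ * (w2 * w2)) :=
        mul_le_mul ha hb hv0 (by positivity)
  calc v = Real.sqrt (v ^ 2) := (Real.sqrt_sq hv0).symm
  _ ≤ Real.sqrt ((Real.sqrt (C₁ * C₂) * w1 * w2) ^ 2) := Real.sqrt_le_sqrt hvsq
  _ = Real.sqrt (C₁ * C₂) * w1 * w2 := Real.sqrt_sq hM0

lemma VD_continuous (η ξ : 𝓢(V, ℂ)) :
    Continuous fun p : V × V => VD ⇑η ⇑ξ p.1 p.2 := by
  obtain ⟨Cη, _, hCη⟩ := schwartz_bounded η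
  apply continuous_of_dominated (bound := fun s => ‖ξ s‖ * Cη)
  · intro p
    apply Continuous.aestronglyMeasurable
    exact (ξ.continuous.mul (Complex.continuous_conj.comp
      (η.continuous.comp (continuous_id.sub continuous_const)))).mul
      (continuous_e2pi.comp (continuous_const.inner (continuous_id.sub continuous_const)))
  · intro p
    refine ae_of_all _ fun s => ?_
    rw [norm_mul, norm_mul, norm_e2pi, mul_one, RCLike.norm_conj]
    exact mul_le_mul_of_nonneg_left (hCη _) (norm_nonneg _)
  · exact ξ.integrable.norm.mul_const Cη
  · refine ae_of_all _ fun s => ?_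
    apply Continuous.mul
    · exact continuous_const.mul (Complex.continuous_conj.comp
        (η.continuous.comp (continuous_const.sub continuous_fst)))
    · exact continuous_e2pi.comp (continuous_snd.inner (continuous_const.sub continuous_fst))

/-! #### The two main computational steps -/

lemma inner_step (ξ₁ ξ₂ η₁ η₂ : 𝓢(V, ℂ)) (y x y' : V) :
    (∫ x', VD ⇑η₂ ⇑ξ₂ y' x' * VD ⇑η₁ ⇑ξ₁ (y - y') (x - x') * e2pi (-⟪x', y - y'⟫)) =
      ∫ t, (ξ₁ t * (starRingEnd ℂ) (η₁ (t - (y - y'))) * e2pi ⟪x, t - (y - y')⟫) *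
        (ξ₂ (t + y') * (starRingEnd ℂ) (η₂ t)) := by
  set c := y - y' with hc
  set F : 𝓢(V, ℂ) := mulS (trS y' ξ₂) (conjS η₂) with hF
  set K : 𝓢(V, ℂ) := mulS ξ₁ (conjS (trS (-c) η₁)) with hK
  set H : V → ℂ := fun t => K t * e2pi ⟪x, t - c⟫ with hH
  have hKt : ∀ t, K t = ξ₁ t * (starRingEnd ℂ) (η₁ (t - c)) := by
    intro t
    simp [hK, sub_eq_add_neg]
  have hHcont : Continuous H :=
    K.continuous.mul (continuous_e2pi.comp
      (continuous_const.inner (continuous_id.sub continuous_const)))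
  have hHint : Integrable H := by
    have h1 : Integrable (fun t => e2pi ⟪x, t - c⟫ * K t) :=
      Integrable.bdd_mul K.integrable
        ((continuous_e2pi.comp
          (continuous_const.inner (continuous_id.sub continuous_const))).aestronglyMeasurable)
        (c := 1) (ae_of_all _ fun t => le_of_eq (norm_e2pi _))
    exact h1.congr (ae_of_all _ fun t => mul_comm _ _)
  have hA : ∀ x', VD ⇑η₂ ⇑ξ₂ y' x' * VD ⇑η₁ ⇑ξ₁ c (x - x') * e2pi (-⟪x', c⟫)
      = 𝓕⁻ ⇑F x' * 𝓕 H x' := by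
    intro x'
    rw [mul_assoc]
    congr 1
    · exact VD_eq_fourierInv η₂ ξ₂ y' x'
    · rw [fourier_as_e2pi, VD_def, ← integral_mul_const]
      congr 1
      funext t
      rw [hH]
      simp only [hKt t]
      have harg : ⟪x - x', t - c⟫ + -⟪x', c⟫ = ⟪x, t - c⟫ + -⟪t, x'⟫ := by
        simp only [inner_sub_left, inner_sub_right, real_inner_comm t x']
        ring
      calc ξ₁ t * (starRingEnd ℂ) (η₁ (t - c)) * e2pi ⟪x - x', t - c⟫ * e2pi (-⟪x', c⟫)
          = ξ₁ t * (starRingEnd ℂ) (η₁ (t - c)) * e2pi (⟪x - x', t - c⟫ + -⟪x', c⟫) := by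
            rw [e2pi_add]; ring
        _ = ξ₁ t * (starRingEnd ℂ) (η₁ (t - c)) * e2pi (⟪x, t - c⟫ + -⟪t, x'⟫) := by rw [harg]
        _ = ξ₁ t * (starRingEnd ℂ) (η₁ (t - c)) * e2pi ⟪x, t - c⟫ * e2pi (-⟪t, x'⟫) := by
            rw [e2pi_add]; ring
  have h2 : (fun x' => VD ⇑η₂ ⇑ξ₂ y' x' * VD ⇑η₁ ⇑ξ₁ c (x - x') * e2pi (-⟪x', c⟫))
      = fun x' => 𝓕⁻ ⇑F x' * 𝓕 H x' := funext hA
  rw [h2]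
  have h3 : (fun x' => 𝓕⁻ ⇑F x' * 𝓕 H x')
      = fun x' => ∫ t, 𝓕⁻ ⇑F x' * (H t * e2pi (-⟪t, x'⟫)) := by
    funext x'
    rw [fourier_as_e2pi H x', ← integral_const_mul]
  rw [h3]
  rw [integral_integral_swap (f := fun x' t => 𝓕⁻ ⇑F x' * (H t * e2pi (-⟪t, x'⟫)))
    (integrable_kernel (integrable_fourierInv F) hHint (continuous_fourierInv F) hHcont
      (fun a b => e2pi (-⟪b, a⟫))
      (continuous_e2pi.comp (Continuous.neg (continuous_snd.inner continuous_fst)))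
      (fun a b => norm_e2pi _))]
  congr 1
  funext t
  have h4 : (∫ x', 𝓕⁻ ⇑F x' * (H t * e2pi (-⟪t, x'⟫))) = H t * 𝓕 (𝓕⁻ ⇑F) t := by
    rw [fourier_as_e2pi (𝓕⁻ ⇑F) t, ← integral_const_mul]
    congr 1
    funext x'
    rw [real_inner_comm x' t]
    ring
  rw [h4, F.integrable.fourier_fourierInv_eq (integrable_fourier F) F.continuous.continuousAt]
  rw [hH]
  simp only [hKt, hF, mulS_apply, trS_apply, conjS_apply]

lemma integrable_prod_conv (f h : 𝓢(V, ℂ)) :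
    Integrable (fun p : V × V => ‖f p.2‖ * ‖h (p.2 + p.1)‖) (volume.prod volume) := by
  obtain ⟨Ch, hCh0, hCh⟩ := schwartz_bounded h
  obtain ⟨C, hC0, hC⟩ := conv_decay f h (Module.finrank ℝ V + 1)
  have hmeas : AEStronglyMeasurable (fun p : V × V => ‖f p.2‖ * ‖h (p.2 + p.1)‖)
      (volume.prod volume) := by
    apply Continuous.aestronglyMeasurable
    exact ((f.continuous.comp continuous_snd).norm).mul
      ((h.continuous.comp (continuous_snd.add continuous_fst)).norm)
  rw [integrable_prod_iff hmeas]
  constructor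
  · exact ae_of_all _ fun y' => integrable_norm_mul_shift f h y'
  · have hnn : ∀ y' : V, (∫ t, ‖(‖f t‖ * ‖h (t + y')‖)‖) = ∫ t, ‖f t‖ * ‖h (t + y')‖ := by
      intro y'
      congr 1
      funext t
      rw [Real.norm_of_nonneg (by positivity)]
    refine Integrable.mono' (integrable_inv_pow.const_mul C) ?_ (ae_of_all _ fun y' => ?_)
    · apply Continuous.aestronglyMeasurable
      apply continuous_of_dominated (bound := fun t => ‖f t‖ * Ch)
      · intro y'
        apply Continuous.aestronglyMeasurable
        exact (f.continuous.norm.mul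
          ((h.continuous.comp (continuous_id.add continuous_const)).norm)).norm
      · intro y'
        refine ae_of_all _ fun t => ?_
        rw [Real.norm_of_nonneg (by positivity), Real.norm_of_nonneg (by positivity)]
        exact mul_le_mul_of_nonneg_left (hCh _) (norm_nonneg _)
      · exact f.integrable.norm.mul_const Ch
      · refine ae_of_all _ fun t => ?_
        show Continuous fun y' : V => ‖(‖f t‖ * ‖h (t + y')‖)‖
        apply Continuous.norm
        exact continuous_const.mul ((h.continuous.comp
          (continuous_const.add continuous_id)).norm)
    · rw [Real.norm_of_nonneg (integral_nonneg fun t => by positivity), hnn y']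
      exact hC y'

lemma key_step (ξ₁ ξ₂ η₁ η₂ : 𝓢(V, ℂ)) (y x : V) :
    (∫ y', ∫ x', VD ⇑η₂ ⇑ξ₂ y' x' * VD ⇑η₁ ⇑ξ₁ (y - y') (x - x') * e2pi (-⟪x', y - y'⟫)) =
      (∫ t, ξ₁ t * (starRingEnd ℂ) (η₂ t)) * VD ⇑η₁ ⇑ξ₂ y x := by
  have h1 : (fun y' => ∫ x', VD ⇑η₂ ⇑ξ₂ y' x' * VD ⇑η₁ ⇑ξ₁ (y - y') (x - x')
      * e2pi (-⟪x', y - y'⟫))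
      = fun y' => ∫ t, (ξ₁ t * (starRingEnd ℂ) (η₁ (t - (y - y'))) * e2pi ⟪x, t - (y - y')⟫) *
        (ξ₂ (t + y') * (starRingEnd ℂ) (η₂ t)) :=
    funext fun y' => inner_step ξ₁ ξ₂ η₁ η₂ y x y'
  rw [h1]
  set P : 𝓢(V, ℂ) := mulS ξ₁ (conjS η₂) with hP
  obtain ⟨Cη, hCη0, hCη⟩ := schwartz_bounded η₁
  have hJint : Integrable (Function.uncurry fun y' t =>
      (ξ₁ t * (starRingEnd ℂ) (η₁ (t - (y - y'))) * e2pi ⟪x, t - (y - y')⟫) *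
        (ξ₂ (t + y') * (starRingEnd ℂ) (η₂ t))) (volume.prod volume) := by
    refine Integrable.mono' (((integrable_prod_conv P ξ₂).const_mul Cη)) ?_
      (ae_of_all _ fun p => ?_)
    · apply Continuous.aestronglyMeasurable
      apply Continuous.mul
      · apply Continuous.mul
        · apply Continuous.mul
          · exact ξ₁.continuous.comp continuous_snd
          · exact Complex.continuous_conj.comp (η₁.continuous.comp
              (continuous_snd.sub (continuous_const.sub continuous_fst)))
        · exact continuous_e2pi.comp (continuous_const.inner
            (continuous_snd.sub (continuous_const.sub continuous_fst)))
      · apply Continuous.mul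
        · exact ξ₂.continuous.comp (continuous_snd.add continuous_fst)
        · exact Complex.continuous_conj.comp (η₂.continuous.comp continuous_snd)
    · have : ‖Function.uncurry (fun y' t =>
          (ξ₁ t * (starRingEnd ℂ) (η₁ (t - (y - y'))) * e2pi ⟪x, t - (y - y')⟫) *
            (ξ₂ (t + y') * (starRingEnd ℂ) (η₂ t))) p‖
          = ‖η₁ (p.2 - (y - p.1))‖ * (‖ξ₁ p.2 * (starRingEnd ℂ) (η₂ p.2)‖ * ‖ξ₂ (p.2 + p.1)‖) := by
        simp only [Function.uncurry, norm_mul, norm_e2pi, RCLike.norm_conj]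
        ring
      rw [this]
      have hPp : ‖ξ₁ p.2 * (starRingEnd ℂ) (η₂ p.2)‖ = ‖P p.2‖ := by simp [hP]
      rw [hPp]
      exact mul_le_mul_of_nonneg_right (hCη _) (by positivity)
  rw [integral_integral_swap hJint]
  have h5 : (fun t => ∫ y',
      (ξ₁ t * (starRingEnd ℂ) (η₁ (t - (y - y'))) * e2pi ⟪x, t - (y - y')⟫) *
        (ξ₂ (t + y') * (starRingEnd ℂ) (η₂ t)))
      = fun t => (ξ₁ t * (starRingEnd ℂ) (η₂ t)) * VD ⇑η₁ ⇑ξ₂ y x := by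
    funext t
    have h6 : ∀ y' : V,
        (ξ₁ t * (starRingEnd ℂ) (η₁ (t - (y - y'))) * e2pi ⟪x, t - (y - y')⟫) *
          (ξ₂ (t + y') * (starRingEnd ℂ) (η₂ t))
        = (ξ₁ t * (starRingEnd ℂ) (η₂ t)) *
          (ξ₂ (y' + t) * (starRingEnd ℂ) (η₁ (y' + t - y)) * e2pi ⟪x, y' + t - y⟫) := by
      intro y'
      have ha1 : t - (y - y') = y' + t - y := by abel
      have ha2 : t + y' = y' + t := by abel
      rw [ha1, ha2]
      ring
    have h7 : (fun y' => (ξ₁ t * (starRingEnd ℂ) (η₁ (t - (y - y'))) * e2pi ⟪x, t - (y - y')⟫) *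
          (ξ₂ (t + y') * (starRingEnd ℂ) (η₂ t)))
        = fun y' => (ξ₁ t * (starRingEnd ℂ) (η₂ t)) *
          ((fun v => ξ₂ v * (starRingEnd ℂ) (η₁ (v - y)) * e2pi ⟪x, v - y⟫) (y' + t)) :=
      funext h6
    rw [h7, integral_const_mul,
      integral_add_right_eq_self (fun v => ξ₂ v * (starRingEnd ℂ) (η₁ (v - y)) * e2pi ⟪x, v - y⟫) t]
    rfl
  rw [h5, integral_mul_const]

end InnerSpace

/-! #### Bridge between `Fin n → ℝ` and `EuclideanSpace ℝ (Fin n)` -/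

section Bridge

variable {n : ℕ}

abbrev Eu (n : ℕ) := EuclideanSpace ℝ (Fin n)

def piE {n : ℕ} (x : Eu n) : Fin n → ℝ := x.ofLp

def toE {n : ℕ} (x : Fin n → ℝ) : Eu n := WithLp.toLp 2 x

/-- Transfer of a Schwartz function to Euclidean space. -/
def toS (f : SchwartzMap (Fin n → ℝ) ℂ) : 𝓢(Eu n, ℂ) :=
  SchwartzMap.compCLMOfContinuousLinearEquiv ℝ (EuclideanSpace.equiv (Fin n) ℝ) f

@[simp] lemma toS_apply (f : SchwartzMap (Fin n → ℝ) ℂ) (x : Eu n) :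
    toS f x = f (piE x) := rfl

lemma integral_pi_eq (f : (Fin n → ℝ) → ℂ) : ∫ x, f x = ∫ (x : Eu n), f (piE x) :=
  ((EuclideanSpace.volume_preserving_symm_measurableEquiv_toLp (Fin n)).integral_comp
    (MeasurableEquiv.toLp 2 (Fin n → ℝ)).symm.measurableEmbedding f).symm

lemma dot_eq_inner (x y : Eu n) : dot (piE x) (piE y) = ⟪x, y⟫ := by
  simp [dot, piE, PiLp.inner_apply, RCLike.inner_apply]
  exact Finset.sum_congr rfl fun i _ => mul_comm _ _

lemma pi_norm_le_eu (x : Eu n) : ‖piE x‖ ≤ ‖x‖ := by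
  rw [pi_norm_le_iff_of_nonneg (norm_nonneg x)]
  intro i
  show ‖x i‖ ≤ ‖x‖
  rw [← Real.sqrt_sq (norm_nonneg (x i)), EuclideanSpace.norm_eq]
  apply Real.sqrt_le_sqrt
  exact Finset.single_le_sum (f := fun j => ‖x j‖ ^ 2) (fun j _ => sq_nonneg _)
    (Finset.mem_univ i)

lemma continuous_toE : Continuous (toE (n := n)) :=
  PiLp.continuous_toLp _ _

lemma stftDual_eq (η ξ : SchwartzMap (Fin n → ℝ) ℂ) (p : (Fin n → ℝ) × (Fin n → ℝ)) :
    stftDual ⇑η ⇑ξ p = VD ⇑(toS η) ⇑(toS ξ) (toE p.1) (toE p.2) := by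
  unfold stftDual ip schrodDual VD
  rw [integral_pi_eq]
  congr 1
  funext s
  have h1 : dot p.2 (piE s - p.1) = ⟪toE p.2, s - toE p.1⟫ := dot_eq_inner (toE p.2) (s - toE p.1)
  rw [map_mul, conj_e2pi, h1, neg_neg]
  have h2 : η (piE s - p.1) = toS η (s - toE p.1) := rfl
  have h3 : ξ (piE s) = toS ξ s := rfl
  rw [h2, h3]
  ring

lemma ip_eq (f g : SchwartzMap (Fin n → ℝ) ℂ) :
    ip ⇑f ⇑g = ∫ (t : Eu n), toS f t * (starRingEnd ℂ) (toS g t) := by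
  unfold ip
  rw [integral_pi_eq]
  rfl

lemma stftDual_continuous (η ξ : SchwartzMap (Fin n → ℝ) ℂ) :
    Continuous (stftDual ⇑η ⇑ξ) := by
  have h : stftDual ⇑η ⇑ξ = (fun q : Eu n × Eu n => VD ⇑(toS η) ⇑(toS ξ) q.1 q.2) ∘
      (fun p : (Fin n → ℝ) × (Fin n → ℝ) => (toE p.1, toE p.2)) :=
    funext fun p => stftDual_eq η ξ p
  rw [h]
  exact (VD_continuous (toS η) (toS ξ)).comp
    ((continuous_toE.comp continuous_fst).prodMk (continuous_toE.comp continuous_snd))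

lemma continuous_dot : Continuous fun p : (Fin n → ℝ) × (Fin n → ℝ) => dot p.1 p.2 := by
  unfold dot
  apply continuous_finset_sum
  intro i _
  exact ((continuous_apply i).comp continuous_fst).mul ((continuous_apply i).comp continuous_snd)

lemma stftDual_decay (η ξ : SchwartzMap (Fin n → ℝ) ℂ) :
    ∃ C : ℝ, 0 ≤ C ∧ ∀ p : (Fin n → ℝ) × (Fin n → ℝ), ‖stftDual ⇑η ⇑ξ p‖ ≤
      C * ((1 + ‖p.1‖) ^ (n + 1))⁻¹ * ((1 + ‖p.2‖) ^ (n + 1))⁻¹ := by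
  obtain ⟨C, hC0, hC⟩ := VD_decay (toS η) (toS ξ)
  rw [finrank_euclideanSpace_fin] at hC
  refine ⟨C, hC0, fun p => ?_⟩
  rw [stftDual_eq]
  refine (hC (toE p.1) (toE p.2)).trans ?_
  have hle : ∀ u : Fin n → ℝ, ((1 + ‖toE u‖) ^ (n + 1))⁻¹ ≤ ((1 + ‖u‖) ^ (n + 1))⁻¹ := by
    intro u
    apply inv_anti₀ (by positivity)
    apply pow_le_pow_left₀ (by positivity)
    have := pi_norm_le_eu (toE u)
    have h2 : ‖piE (toE u)‖ = ‖u‖ := rfl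
    linarith
  calc C * ((1 + ‖toE p.1‖) ^ (n + 1))⁻¹ * ((1 + ‖toE p.2‖) ^ (n + 1))⁻¹
      ≤ C * ((1 + ‖p.1‖) ^ (n + 1))⁻¹ * ((1 + ‖toE p.2‖) ^ (n + 1))⁻¹ := by
        apply mul_le_mul_of_nonneg_right _ (by positivity)
        exact mul_le_mul_of_nonneg_left (hle p.1) hC0
    _ ≤ C * ((1 + ‖p.1‖) ^ (n + 1))⁻¹ * ((1 + ‖p.2‖) ^ (n + 1))⁻¹ := by
        apply mul_le_mul_of_nonneg_left (hle p.2) (by positivity)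

lemma stftDual_bounded (η ξ : SchwartzMap (Fin n → ℝ) ℂ) :
    ∃ C : ℝ, 0 ≤ C ∧ ∀ p : (Fin n → ℝ) × (Fin n → ℝ), ‖stftDual ⇑η ⇑ξ p‖ ≤ C := by
  obtain ⟨C, hC0, hC⟩ := stftDual_decay η ξ
  refine ⟨C, hC0, fun p => (hC p).trans ?_⟩
  have h1 : ((1 + ‖p.1‖) ^ (n + 1))⁻¹ ≤ 1 := by
    apply inv_le_one_of_one_le₀
    apply one_le_pow₀
    linarith [norm_nonneg p.1]
  have h2 : ((1 + ‖p.2‖) ^ (n + 1))⁻¹ ≤ 1 := by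
    apply inv_le_one_of_one_le₀
    apply one_le_pow₀
    linarith [norm_nonneg p.2]
  calc C * ((1 + ‖p.1‖) ^ (n + 1))⁻¹ * ((1 + ‖p.2‖) ^ (n + 1))⁻¹
      ≤ C * 1 * 1 := by
        apply mul_le_mul (mul_le_mul_of_nonneg_left h1 hC0) h2 (by positivity) (by positivity)
    _ = C := by ring

lemma integrable_inv_pow_pi :
    Integrable (fun t : Fin n → ℝ => ((1 + ‖t‖) ^ (n + 1))⁻¹) := by
  have h := integrable_one_add_norm (E := Fin n → ℝ) (μ := volume)
    (r := (n : ℝ) + 1) (by rw [Module.finrank_fin_fun]; norm_num)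
  refine h.congr (ae_of_all _ fun t => ?_)
  show (1 + ‖t‖) ^ (-((n : ℝ) + 1)) = ((1 + ‖t‖) ^ (n + 1))⁻¹
  rw [Real.rpow_neg (by positivity)]
  congr 1
  rw [← Real.rpow_natCast (1 + ‖t‖) (n + 1)]
  norm_num

lemma integrable_main (ξ₁ ξ₂ η₁ η₂ : SchwartzMap (Fin n → ℝ) ℂ)
    (g : (Fin n → ℝ) × (Fin n → ℝ)) :
    Integrable (fun g' : (Fin n → ℝ) × (Fin n → ℝ) =>
      stftDual ⇑η₂ ⇑ξ₂ g' * stftDual ⇑η₁ ⇑ξ₁ (g - g') * sigmaG g' (g - g')) := by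
  obtain ⟨C, hC0, hC⟩ := stftDual_decay η₂ ξ₂
  obtain ⟨C₁, hC₁0, hC₁⟩ := stftDual_bounded η₁ ξ₁
  have hbint : Integrable (fun g' : (Fin n → ℝ) × (Fin n → ℝ) =>
      (C * C₁) * (((1 + ‖g'.1‖) ^ (n + 1))⁻¹ * ((1 + ‖g'.2‖) ^ (n + 1))⁻¹)) := by
    rw [MeasureTheory.Measure.volume_eq_prod]
    exact (integrable_inv_pow_pi.mul_prod integrable_inv_pow_pi).const_mul _
  refine hbint.mono' ?_ (ae_of_all _ fun g' => ?_)
  · apply Continuous.aestronglyMeasurable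
    apply Continuous.mul
    · apply Continuous.mul
      · exact stftDual_continuous η₂ ξ₂
      · exact (stftDual_continuous η₁ ξ₁).comp (continuous_const.sub continuous_id)
    · unfold sigmaG
      apply continuous_e2pi.comp
      apply Continuous.neg
      exact continuous_dot.comp ((continuous_snd.comp continuous_id).prodMk
        (continuous_const.sub (continuous_fst.comp continuous_id)))
  · have hσ : ‖sigmaG g' (g - g')‖ = 1 := norm_e2pi _
    rw [norm_mul, norm_mul, hσ, mul_one]
    calc ‖stftDual ⇑η₂ ⇑ξ₂ g'‖ * ‖stftDual ⇑η₁ ⇑ξ₁ (g - g')‖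
        ≤ (C * ((1 + ‖g'.1‖) ^ (n + 1))⁻¹ * ((1 + ‖g'.2‖) ^ (n + 1))⁻¹) * C₁ :=
          mul_le_mul (hC g') (hC₁ _) (norm_nonneg _) (by positivity)
      _ = (C * C₁) * (((1 + ‖g'.1‖) ^ (n + 1))⁻¹ * ((1 + ‖g'.2‖) ^ (n + 1))⁻¹) := by ring

end Bridge

end TwistedAux

open TwistedAux
open scoped RealInnerProductSpace

/-- Twisted convolution of dual short-time Fourier transforms: for Schwartz
functions `ξ₁, ξ₂, η₁, η₂`, `(V°_{η₂}ξ₂ ♮ V°_{η₁}ξ₁)(g) = ⟨ξ₁, η₂⟩ · V°_{η₁}ξ₂(g)`. -/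
theorem twisted_conv_dual_stft (ξ₁ ξ₂ η₁ η₂ : SchwartzMap (Fin n → ℝ) ℂ)
    (g : (Fin n → ℝ) × (Fin n → ℝ)) :
    twConv (stftDual ⇑η₂ ⇑ξ₂) (stftDual ⇑η₁ ⇑ξ₁) g
      = ip ⇑ξ₁ ⇑η₂ * stftDual ⇑η₁ ⇑ξ₂ g := by
  unfold twConv
  rw [MeasureTheory.Measure.volume_eq_prod]
  rw [MeasureTheory.integral_prod _ (by
    rw [← MeasureTheory.Measure.volume_eq_prod]
    exact integrable_main ξ₁ ξ₂ η₁ η₂ g)]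
  have hsub : ∀ y' x' : Fin n → ℝ, g - (y', x') = (g.1 - y', g.2 - x') := fun y' x' => rfl
  have hpt : ∀ y' x' : Fin n → ℝ,
      stftDual ⇑η₂ ⇑ξ₂ (y', x') * stftDual ⇑η₁ ⇑ξ₁ (g - (y', x')) * sigmaG (y', x') (g - (y', x'))
      = VD ⇑(toS η₂) ⇑(toS ξ₂) (toE y') (toE x') *
        VD ⇑(toS η₁) ⇑(toS ξ₁) (toE g.1 - toE y') (toE g.2 - toE x') *
        e2pi (-⟪toE x', toE g.1 - toE y'⟫) := by
    intro y' x'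
    rw [hsub y' x']
    unfold sigmaG
    rw [stftDual_eq, stftDual_eq]
    have h1 : dot x' (g.1 - y') = ⟪toE x', toE g.1 - toE y'⟫ :=
      dot_eq_inner (toE x') (toE g.1 - toE y')
    rw [h1]
    rfl
  have hout : (fun y' => ∫ x', stftDual ⇑η₂ ⇑ξ₂ (y', x') * stftDual ⇑η₁ ⇑ξ₁ (g - (y', x')) *
      sigmaG (y', x') (g - (y', x')))
      = fun y' => ∫ (x' : Eu n), VD ⇑(toS η₂) ⇑(toS ξ₂) (toE y') x' *
          VD ⇑(toS η₁) ⇑(toS ξ₁) (toE g.1 - toE y') (toE g.2 - x') *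
          e2pi (-⟪x', toE g.1 - toE y'⟫) := by
    funext y'
    rw [show (fun x' => stftDual ⇑η₂ ⇑ξ₂ (y', x') * stftDual ⇑η₁ ⇑ξ₁ (g - (y', x')) *
        sigmaG (y', x') (g - (y', x')))
      = fun x' => VD ⇑(toS η₂) ⇑(toS ξ₂) (toE y') (toE x') *
          VD ⇑(toS η₁) ⇑(toS ξ₁) (toE g.1 - toE y') (toE g.2 - toE x') *
          e2pi (-⟪toE x', toE g.1 - toE y'⟫) from funext fun x' => hpt y' x']
    exact integral_pi_eq _
  rw [hout]
  rw [integral_pi_eq (fun y' => _)]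
  have hmain := key_step (toS ξ₁) (toS ξ₂) (toS η₁) (toS η₂) (toE g.1) (toE g.2)
  rw [show (fun y' : Eu n => ∫ (x' : Eu n), VD ⇑(toS η₂) ⇑(toS ξ₂) (toE (piE y')) x' *
      VD ⇑(toS η₁) ⇑(toS ξ₁) (toE g.1 - toE (piE y')) (toE g.2 - x') *
      e2pi (-⟪x', toE g.1 - toE (piE y')⟫))
    = fun y' : Eu n => ∫ (x' : Eu n), VD ⇑(toS η₂) ⇑(toS ξ₂) y' x' *
      VD ⇑(toS η₁) ⇑(toS ξ₁) (toE g.1 - y') (toE g.2 - x') *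
      e2pi (-⟪x', toE g.1 - y'⟫) from rfl]
  rw [hmain]
  rw [ip_eq ξ₁ η₂, stftDual_eq η₁ ξ₂ g]
end
end
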